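/- For each cd-word u of degree n, the column sums Σ_u 2^{|w|_d+1} η_{u,w} over all u equal 2^{n+1} for every cd-word w of degree n; equivalently, 2^{|w|_d+1} · #{T ⊆ [n] : T, [n]\T ∈ b[I^w]} = 2^{n+1}. -/
import Mathlib


/-- The degree of a cd-word (`false` = c, degree 1; `true` = d, degree 2). -/
def degw (w : List Bool) : ℕ := (w.map (fun b => if b then 2 else 1)).sum

/-- The left sparse set `S_w` of a cd-word: degrees of prefixes ending at each d. -/
def Sw (w : List Bool) : Finset ℕ :=
  ((Finset.range w.length).filter (fun j => w.getD j false = true)).image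
    (fun j => degw (w.take (j + 1)))

/-- `T ∈ b[I^w]`: `T` meets every interval `{i-1, i}` with `i ∈ S_w`. -/
def blocks (w : List Bool) (T : Finset ℕ) : Prop := ∀ i ∈ Sw w, i - 1 ∈ T ∨ i ∈ T

instance (w : List Bool) (T : Finset ℕ) : Decidable (blocks w T) := by
  unfold blocks; infer_instance


lemma degw_append (a b : List Bool) : degw (a ++ b) = degw a + degw b := by
  simp [degw]

lemma degw_take_succ (w : List Bool) (k : ℕ) (hk : k < w.length) :
    degw (w.take (k+1)) = degw (w.take k) + (if w.getD k false then 2 else 1) := by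
  have h : w.take (k+1) = w.take k ++ [w.getD k false] := by
    rw [List.take_succ]
    congr 1
    rw [List.getElem?_eq_getElem hk]
    simp [List.getD_eq_getElem?_getD, List.getElem?_eq_getElem hk]
  rw [h, degw_append]
  simp [degw]

lemma degw_take_succ_true {w : List Bool} {k : ℕ} (hk : k < w.length)
    (hd : w.getD k false = true) :
    degw (w.take (k+1)) = degw (w.take k) + 2 := by
  rw [degw_take_succ w k hk, hd]
  rfl

lemma degw_take_mono (w : List Bool) {k m : ℕ} (h : k ≤ m) :
    degw (w.take k) ≤ degw (w.take m) := by
  have h1 : (w.take m).take k = w.take k := by rw [List.take_take, min_eq_left h]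
  calc degw (w.take k) = degw ((w.take m).take k) := by rw [h1]
    _ ≤ degw ((w.take m).take k) + degw ((w.take m).drop k) := Nat.le_add_right _ _
    _ = degw (w.take m) := by rw [← degw_append, List.take_append_drop]

lemma degw_take_lt (w : List Bool) {k : ℕ} (hk : k < w.length) :
    degw (w.take k) < degw (w.take (k+1)) := by
  rw [degw_take_succ w k hk]; split <;> omega

lemma mem_Sw {w : List Bool} {i : ℕ} :
    i ∈ Sw w ↔ ∃ j, j < w.length ∧ w.getD j false = true ∧ degw (w.take (j+1)) = i := by
  simp [Sw, and_assoc]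

lemma Sw_bounds {w : List Bool} {i : ℕ} (hi : i ∈ Sw w) : 2 ≤ i ∧ i ≤ degw w := by
  obtain ⟨j, hj, hd, rfl⟩ := mem_Sw.mp hi
  constructor
  · rw [degw_take_succ_true hj hd]; omega
  · have h1 : degw (w.take (j+1)) ≤ degw (w.take w.length) := degw_take_mono w (by omega)
    rwa [List.take_length] at h1

lemma Sw_sparse {w : List Bool} {i i' : ℕ} (hi : i ∈ Sw w) (hi' : i' ∈ Sw w)
    (h : i < i') : i + 2 ≤ i' := by
  obtain ⟨j, hj, hd, rfl⟩ := mem_Sw.mp hi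
  obtain ⟨j', hj', hd', rfl⟩ := mem_Sw.mp hi'
  have hjj : j < j' := by
    by_contra hc
    have h1 : degw (w.take (j'+1)) ≤ degw (w.take (j+1)) := degw_take_mono w (by omega)
    omega
  have h1 : degw (w.take (j+1)) ≤ degw (w.take j') := degw_take_mono w (by omega)
  rw [degw_take_succ_true hj' hd']
  omega

lemma card_filter_getD (w : List Bool) :
    ((Finset.range w.length).filter (fun j => w.getD j false = true)).card
      = w.count true := by
  induction w using List.reverseRecOn with
  | nil => simp
  | append_singleton t b ih =>
    have hlen : (t ++ [b]).length = t.length + 1 := by simp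
    rw [hlen, Finset.range_add_one, Finset.filter_insert]
    have hgd : ∀ j < t.length, (t ++ [b]).getD j false = t.getD j false := by
      intro j hj
      rw [List.getD_append _ _ _ _ hj]
    have hfe : (Finset.range t.length).filter (fun j => (t ++ [b]).getD j false = true)
        = (Finset.range t.length).filter (fun j => t.getD j false = true) := by
      apply Finset.filter_congr
      intro j hj
      rw [hgd j (Finset.mem_range.mp hj)]
    have hlast : (t ++ [b]).getD t.length false = b := by
      rw [List.getD_eq_getElem?_getD]
      simp
    have hcnt : (t ++ [b]).count true = t.count true + (if b = true then 1 else 0) := by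
      rw [List.count_append]
      rcases b <;> simp
    rw [hcnt, hlast]
    split
    · rw [Finset.card_insert_of_notMem (by simp), hfe, ih]
    · rw [hfe, ih]; omega

lemma Sw_card (w : List Bool) : (Sw w).card = w.count true := by
  rw [Sw, Finset.card_image_of_injOn, card_filter_getD]
  intro a ha b hb hab
  simp only [Finset.mem_coe, Finset.mem_filter, Finset.mem_range] at ha hb
  dsimp only at hab
  by_contra hne
  rcases Nat.lt_or_ge a b with h | h
  · have h1 : degw (w.take (a+1)) ≤ degw (w.take b) := degw_take_mono w (by omega)
    have h2 := degw_take_lt w hb.1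
    omega
  · have h1 : degw (w.take (b+1)) ≤ degw (w.take a) := degw_take_mono w (by omega)
    have h2 := degw_take_lt w ha.1
    omega

def tog (a : ℕ) (T : Finset ℕ) : Finset ℕ := if a ∈ T then T.erase a else insert a T

lemma mem_tog_self (a : ℕ) (T : Finset ℕ) : a ∈ tog a T ↔ a ∉ T := by
  unfold tog; split <;> simp_all

lemma mem_tog_ne {a b : ℕ} (h : b ≠ a) (T : Finset ℕ) : b ∈ tog a T ↔ b ∈ T := by
  unfold tog; split <;> simp [h]

lemma tog_tog (a : ℕ) (T : Finset ℕ) : tog a (tog a T) = T := by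
  ext b
  by_cases hb : b = a
  · subst hb; rw [mem_tog_self, mem_tog_self]; tauto
  · rw [mem_tog_ne hb, mem_tog_ne hb]

lemma tog_subset {a : ℕ} {T s : Finset ℕ} (ha : a ∈ s) (hT : T ⊆ s) : tog a T ⊆ s := by
  unfold tog; split
  · exact (Finset.erase_subset a T).trans hT
  · exact Finset.insert_subset ha hT

lemma count_lemma (s : Finset ℕ) (A : Finset ℕ) :
    (∀ i ∈ A, i - 1 ∈ s ∧ i ∈ s ∧ 2 ≤ i) →
    (∀ i ∈ A, ∀ j ∈ A, i < j → i + 2 ≤ j) →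
    (s.powerset.filter (fun T => ∀ i ∈ A, ((i - 1 ∈ T) ↔ i ∉ T))).card * 2 ^ A.card
      = 2 ^ s.card := by
  induction A using Finset.induction with
  | empty => intro _ _; simp
  | @insert a A haA ih =>
    intro h1 h2
    have ha2 : 2 ≤ a := (h1 a (Finset.mem_insert_self a A)).2.2
    have has : a ∈ s := (h1 a (Finset.mem_insert_self a A)).2.1
    -- for i ∈ A, a is not in the interval {i-1, i}
    have hfar : ∀ i ∈ A, i ≠ a ∧ i - 1 ≠ a := by
      intro i hi
      have hia : i ≠ a := fun h => haA (h ▸ hi)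
      have hi2 := (h1 i (Finset.mem_insert_of_mem hi)).2.2
      rcases Nat.lt_or_ge i a with h | h
      · have := h2 i (Finset.mem_insert_of_mem hi) a (Finset.mem_insert_self a A) h
        omega
      · have := h2 a (Finset.mem_insert_self a A) i (Finset.mem_insert_of_mem hi)
          (lt_of_le_of_ne h (Ne.symm hia))
        omega
    set F := s.powerset.filter (fun T => ∀ i ∈ A, ((i - 1 ∈ T) ↔ i ∉ T)) with hF
    have hsplit := Finset.card_filter_add_card_filter_not
      (s := F) (p := fun T => ((a - 1 ∈ T) ↔ a ∉ T))
    have hG : F.filter (fun T => ((a - 1 ∈ T) ↔ a ∉ T))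
        = s.powerset.filter (fun T => ∀ i ∈ insert a A, ((i - 1 ∈ T) ↔ i ∉ T)) := by
      rw [hF, Finset.filter_filter]
      apply Finset.filter_congr
      intro T _
      simp only [Finset.forall_mem_insert]
      tauto
    -- bijection between the two halves via toggling a
    have hbij : (F.filter (fun T => ((a - 1 ∈ T) ↔ a ∉ T))).card
        = (F.filter (fun T => ¬ ((a - 1 ∈ T) ↔ a ∉ T))).card := by
      apply Finset.card_bij' (fun T _ => tog a T) (fun T _ => tog a T)
      · intro T hT
        simp only [hF, Finset.mem_filter, Finset.mem_powerset] at hT ⊢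
        obtain ⟨⟨hTs, hTc⟩, hTa⟩ := hT
        refine ⟨⟨tog_subset has hTs, ?_⟩, ?_⟩
        · intro i hi
          rw [mem_tog_ne (hfar i hi).2, mem_tog_ne (hfar i hi).1]
          exact hTc i hi
        · rw [mem_tog_ne (by omega : a - 1 ≠ a), mem_tog_self]
          tauto
      · intro T hT
        simp only [hF, Finset.mem_filter, Finset.mem_powerset] at hT ⊢
        obtain ⟨⟨hTs, hTc⟩, hTa⟩ := hT
        refine ⟨⟨tog_subset has hTs, ?_⟩, ?_⟩
        · intro i hi
          rw [mem_tog_ne (hfar i hi).2, mem_tog_ne (hfar i hi).1]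
          exact hTc i hi
        · rw [mem_tog_ne (by omega : a - 1 ≠ a), mem_tog_self]
          tauto
      · intro T _; exact tog_tog a T
      · intro T _; exact tog_tog a T
    have hAcard : (insert a A).card = A.card + 1 := Finset.card_insert_of_notMem haA
    have hih := ih (fun i hi => h1 i (Finset.mem_insert_of_mem hi))
      (fun i hi j hj hij => h2 i (Finset.mem_insert_of_mem hi) j (Finset.mem_insert_of_mem hj) hij)
    have hFc : F.card = 2 * (F.filter (fun T => ((a - 1 ∈ T) ↔ a ∉ T))).card := by omega
    rw [← hG, hAcard, pow_succ, ← hih, hFc]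
    ring

/-- for every cd-word `w` of degree `n` (with `|w|_d` the number of
d's in `w`), `2^{|w|_d + 1} · #{T ⊆ [n] : T, [n]\T ∈ b[I^w]} = 2^{n+1}`, i.e. each
column sum of the matrix of `ϑ` equals `2^{n+1}`. -/
theorem stmt_14 (n : ℕ) (w : List Bool) (hw : degw w = n) :
    2 ^ (w.count true + 1) *
        ((Finset.Icc 1 n).powerset.filter
          (fun T => blocks w T ∧ blocks w (Finset.Icc 1 n \ T))).card
      = 2 ^ (n + 1) := by
  have hcongr : (Finset.Icc 1 n).powerset.filter
        (fun T => blocks w T ∧ blocks w (Finset.Icc 1 n \ T))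
      = (Finset.Icc 1 n).powerset.filter
        (fun T => ∀ i ∈ Sw w, ((i - 1 ∈ T) ↔ i ∉ T)) := by
    apply Finset.filter_congr
    intro T hT
    rw [Finset.mem_powerset] at hT
    simp only [blocks, Finset.mem_sdiff]
    constructor
    · rintro ⟨hb, hb'⟩ i hi
      have h1 := hb i hi
      have h2 := hb' i hi
      tauto
    · intro h
      refine ⟨fun i hi => ?_, fun i hi => ?_⟩
      · have := h i hi; tauto
      · have hbd := Sw_bounds hi
        rw [hw] at hbd
        have hm1 : i - 1 ∈ Finset.Icc 1 n := Finset.mem_Icc.mpr (by omega)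
        have hm2 : i ∈ Finset.Icc 1 n := Finset.mem_Icc.mpr (by omega)
        have := h i hi
        tauto
  have hcl := count_lemma (Finset.Icc 1 n) (Sw w)
    (fun i hi => by
      have hbd := Sw_bounds hi
      rw [hw] at hbd
      exact ⟨Finset.mem_Icc.mpr (by omega), Finset.mem_Icc.mpr (by omega), hbd.1⟩)
    (fun i hi j hj hij => Sw_sparse hi hj hij)
  rw [Sw_card, Nat.card_Icc] at hcl
  simp only [Nat.add_sub_cancel] at hcl
  rw [hcongr, pow_succ, pow_succ, ← hcl]
  ring
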